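/- Every non-abelian nilpotent real Lie algebra contains a copy of the three-dimensional Heisenberg Lie algebra: if L is a Lie algebra over ℝ that is nilpotent and not abelian (i.e., there exist a, b ∈ L with ⁅a,b⁆ ≠ 0), then there exist x, y ∈ L such that ⁅x,y⁆ ≠ 0, the element ⁅x,y⁆ is central in L (⁅⁅x,y⁆, w⁆ = 0 for all w ∈ L), and the three elements x, y, ⁅x,y⁆ are linearly independent over ℝ. In particular the ℝ-span of x, y, ⁅x,y⁆ is a Lie subalgebra of L isomorphic to the Heisenberg Lie algebra 𝔥₃. -/

import Mathlib

/-- Every non-abelian nilpotent real Lie algebra contains a copy of the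
three-dimensional Heisenberg Lie algebra `𝔥₃`: there are `x, y` with `⁅x,y⁆ ≠ 0`,
`⁅x,y⁆` central, and `x, y, ⁅x,y⁆` linearly independent over `ℝ`. -/
theorem nilpotent_nonabelian_contains_heisenberg (L : Type*) [LieRing L]
    [LieAlgebra ℝ L] [LieRing.IsNilpotent L] (h : ∃ a b : L, ⁅a, b⁆ ≠ 0) :
    ∃ x y : L, ⁅x, y⁆ ≠ 0 ∧ (∀ w : L, ⁅⁅x, y⁆, w⁆ = 0) ∧
      LinearIndependent ℝ ![x, y, ⁅x, y⁆] := by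
  classical
  obtain ⟨a, b, hab⟩ := h
  have hP : ∃ k, LieModule.lowerCentralSeries ℝ L L k = ⊥ :=
    LieModule.IsNilpotent.nilpotent ℝ L L
  have hn : LieModule.lowerCentralSeries ℝ L L (Nat.find hP) = ⊥ := Nat.find_spec hP
  have h1ne : LieModule.lowerCentralSeries ℝ L L 1 ≠ ⊥ := by
    intro hbot
    apply hab
    have : ⁅a, b⁆ ∈ LieModule.lowerCentralSeries ℝ L L 1 := by
      rw [LieModule.lowerCentralSeries_succ]
      exact LieSubmodule.lie_mem_lie (LieSubmodule.mem_top a) (LieSubmodule.mem_top b)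
    rw [hbot] at this
    exact (LieSubmodule.mem_bot _).mp this
  have h2 : 2 ≤ Nat.find hP := by
    by_contra hlt
    push_neg at hlt
    have hle : Nat.find hP ≤ 1 := by omega
    exact h1ne (le_bot_iff.mp (hn ▸ LieModule.antitone_lowerCentralSeries ℝ L L hle))
  obtain ⟨k, hk⟩ : ∃ k, Nat.find hP = k + 2 := ⟨Nat.find hP - 2, by omega⟩
  rw [hk] at hn
  have hk1 : LieModule.lowerCentralSeries ℝ L L (k + 1) ≠ ⊥ := Nat.find_min hP (by omega)
  have hxy : ∃ x y : L, y ∈ LieModule.lowerCentralSeries ℝ L L k ∧ ⁅x, y⁆ ≠ 0 := by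
    by_contra hc
    push_neg at hc
    apply hk1
    rw [LieModule.lowerCentralSeries_succ, LieSubmodule.lie_eq_bot_iff]
    intro x _ m hm
    exact hc x m hm
  obtain ⟨x, y, hy, hz⟩ := hxy
  have hzmem : ⁅x, y⁆ ∈ LieModule.lowerCentralSeries ℝ L L (k + 1) := by
    rw [LieModule.lowerCentralSeries_succ]
    exact LieSubmodule.lie_mem_lie (LieSubmodule.mem_top x) hy
  have hcentral : ∀ w : L, ⁅⁅x, y⁆, w⁆ = 0 := by
    intro w
    have : ⁅w, ⁅x, y⁆⁆ ∈ LieModule.lowerCentralSeries ℝ L L (k + 2) := by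
      rw [LieModule.lowerCentralSeries_succ]
      exact LieSubmodule.lie_mem_lie (LieSubmodule.mem_top w) hzmem
    rw [hn] at this
    have h0 : ⁅w, ⁅x, y⁆⁆ = 0 := (LieSubmodule.mem_bot _).mp this
    rw [← lie_skew, h0, neg_zero]
  refine ⟨x, y, hz, hcentral, ?_⟩
  rw [Fintype.linearIndependent_iff]
  intro g hg
  rw [Fin.sum_univ_three] at hg
  simp only [Matrix.cons_val_zero, Matrix.cons_val_one, Matrix.head_cons,
    Matrix.cons_val_two, Matrix.tail_cons] at hg
  have hzy : ⁅⁅x, y⁆, y⁆ = 0 := hcentral y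
  have hzx : ⁅⁅x, y⁆, x⁆ = 0 := hcentral x
  have h0 : g 0 = 0 := by
    have := congrArg (fun v => ⁅v, y⁆) hg
    simp only [add_lie, smul_lie, lie_self, smul_zero, lie_zero, zero_lie, hzy,
      add_zero, zero_add] at this
    exact (smul_eq_zero.mp this).resolve_right hz
  have h1 : g 1 = 0 := by
    have h1' := congrArg (fun v => ⁅v, x⁆) hg
    simp only [add_lie, smul_lie, lie_self, smul_zero, lie_zero, zero_lie, hzx,
      add_zero, zero_add] at h1'
    have h1'' : g 1 • ⁅x, y⁆ = 0 := by
      rw [← lie_skew, smul_neg, h1', neg_zero]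
    exact (smul_eq_zero.mp h1'').resolve_right hz
  have h2' : g 2 = 0 := by
    rw [h0, h1, zero_smul, zero_smul, zero_add, zero_add] at hg
    exact (smul_eq_zero.mp hg).resolve_right hz
  intro i; fin_cases i <;> assumption
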